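/- GL_0(G)* (identified with M_c(G)**) is a left ideal, or a right ideal, of (M(G)**, ⊙) if and only if G is compact. -/

import Mathlib

set_option linter.unusedSectionVars false
set_option linter.unusedVariables false

open MeasureTheory ENNReal Complex Filter Set Topology

noncomputable section

namespace GLpaper

variable (G : Type) [Group G] [TopologicalSpace G] [MeasurableSpace G]

def cmAbs (μ : ComplexMeasure G) : Measure G :=
  (ComplexMeasure.re μ).totalVariation + (ComplexMeasure.im μ).totalVariation

instance (μ : ComplexMeasure G) : IsFiniteMeasure (cmAbs G μ) := by
  unfold cmAbs SignedMeasure.totalVariation; infer_instance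

structure MG where
  toCM : ComplexMeasure G
  regular : (cmAbs G toCM).Regular

def cInt (μ : ComplexMeasure G) (g : G → ℂ) : ℂ :=
  ((∫ x, g x ∂(ComplexMeasure.re μ).toJordanDecomposition.posPart) -
      ∫ x, g x ∂(ComplexMeasure.re μ).toJordanDecomposition.negPart) +
    Complex.I * ((∫ x, g x ∂(ComplexMeasure.im μ).toJordanDecomposition.posPart) -
      ∫ x, g x ∂(ComplexMeasure.im μ).toJordanDecomposition.negPart)

structure GenFun where
  toFun : ∀ μ : MG G, Lp ℂ ⊤ (cmAbs G μ.toCM)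
  compat : ∀ μ ν : MG G, cmAbs G μ.toCM ≪ cmAbs G ν.toCM →
    ⇑(toFun μ) =ᵐ[cmAbs G μ.toCM] ⇑(toFun ν)
  bdd : BddAbove (Set.range fun μ : MG G => ‖toFun μ‖)

namespace GenFun

variable {G}

theorem ext' {f g : GenFun G} (h : ∀ μ, f.toFun μ = g.toFun μ) : f = g := by
  cases f; cases g
  simp only [GenFun.mk.injEq]
  exact funext h

instance : Zero (GenFun G) where
  zero :=
  { toFun := fun _ => 0
    compat := by
      intro μ ν h
      filter_upwards [Lp.coeFn_zero ℂ ⊤ (cmAbs G μ.toCM),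
        (Lp.coeFn_zero ℂ ⊤ (cmAbs G ν.toCM)).filter_mono h.ae_le] with x e1 e2
      rw [e1, e2]
    bdd := ⟨0, by rintro r ⟨μ, rfl⟩; simp⟩ }

instance : Add (GenFun G) where
  add f g :=
  { toFun := fun μ => f.toFun μ + g.toFun μ
    compat := by
      intro μ ν h
      filter_upwards [f.compat μ ν h, g.compat μ ν h,
        Lp.coeFn_add (f.toFun μ) (g.toFun μ),
        (Lp.coeFn_add (f.toFun ν) (g.toFun ν)).filter_mono h.ae_le] with x e1 e2 e3 e4
      simp only [e3, e4, Pi.add_apply, e1, e2]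
    bdd := by
      obtain ⟨Cf, hCf⟩ := f.bdd
      obtain ⟨Cg, hCg⟩ := g.bdd
      refine ⟨Cf + Cg, ?_⟩
      rintro r ⟨μ, rfl⟩
      exact (norm_add_le _ _).trans (add_le_add (hCf ⟨μ, rfl⟩) (hCg ⟨μ, rfl⟩)) }

instance : Neg (GenFun G) where
  neg f :=
  { toFun := fun μ => -f.toFun μ
    compat := by
      intro μ ν h
      filter_upwards [f.compat μ ν h, Lp.coeFn_neg (f.toFun μ),
        (Lp.coeFn_neg (f.toFun ν)).filter_mono h.ae_le] with x e1 e2 e3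
      simp only [e2, e3, Pi.neg_apply, e1]
    bdd := by
      obtain ⟨Cf, hCf⟩ := f.bdd
      refine ⟨Cf, ?_⟩
      rintro r ⟨μ, rfl⟩
      simpa using hCf ⟨μ, rfl⟩ }

instance : SMul ℂ (GenFun G) where
  smul c f :=
  { toFun := fun μ => c • f.toFun μ
    compat := by
      intro μ ν h
      filter_upwards [f.compat μ ν h, Lp.coeFn_smul c (f.toFun μ),
        (Lp.coeFn_smul c (f.toFun ν)).filter_mono h.ae_le] with x e1 e2 e3
      simp only [e2, e3, Pi.smul_apply, e1]
    bdd := by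
      obtain ⟨Cf, hCf⟩ := f.bdd
      refine ⟨‖c‖ * Cf, ?_⟩
      rintro r ⟨μ, rfl⟩
      show ‖c • f.toFun μ‖ ≤ ‖c‖ * Cf
      rw [norm_smul]
      exact mul_le_mul_of_nonneg_left (hCf ⟨μ, rfl⟩) (norm_nonneg c) }

@[simp] theorem zero_toFun (μ : MG G) : (0 : GenFun G).toFun μ = 0 := rfl
@[simp] theorem add_toFun (f g : GenFun G) (μ : MG G) :
    (f + g).toFun μ = f.toFun μ + g.toFun μ := rfl
@[simp] theorem neg_toFun (f : GenFun G) (μ : MG G) : (-f).toFun μ = -f.toFun μ := rfl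
@[simp] theorem smul_toFun (c : ℂ) (f : GenFun G) (μ : MG G) :
    (c • f).toFun μ = c • f.toFun μ := rfl

instance : AddCommGroup (GenFun G) where
  add_assoc a b c := ext' fun μ => add_assoc _ _ _
  zero_add a := ext' fun μ => zero_add _
  add_zero a := ext' fun μ => add_zero _
  add_comm a b := ext' fun μ => add_comm _ _
  neg_add_cancel a := ext' fun μ => neg_add_cancel _
  nsmul := nsmulRec
  zsmul := zsmulRec

instance : Module ℂ (GenFun G) where
  one_smul f := ext' fun μ => one_smul _ _
  mul_smul a b f := ext' fun μ => mul_smul _ _ _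
  smul_zero a := ext' fun μ => smul_zero _
  smul_add a f g := ext' fun μ => smul_add _ _ _
  add_smul a b f := ext' fun μ => add_smul _ _ _
  zero_smul f := ext' fun μ => zero_smul _ _

/-- The norm on generalised functions. -/
def gnorm (f : GenFun G) : ℝ := ⨆ μ : MG G, ‖f.toFun μ‖

theorem gnorm_zero : gnorm (0 : GenFun G) = 0 := by
  rcases isEmpty_or_nonempty (MG G) with h | h
  · exact Real.iSup_of_isEmpty _
  · simp [gnorm]

theorem norm_le_gnorm (f : GenFun G) (μ : MG G) : ‖f.toFun μ‖ ≤ gnorm f :=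
  le_ciSup f.bdd μ

theorem gnorm_nonneg (f : GenFun G) : 0 ≤ gnorm f := by
  rcases isEmpty_or_nonempty (MG G) with h | h
  · rw [gnorm, Real.iSup_of_isEmpty]
  · exact le_trans (norm_nonneg _) (norm_le_gnorm f (Classical.arbitrary _))

theorem gnorm_le {f : GenFun G} {C : ℝ} (h0 : 0 ≤ C) (h : ∀ μ, ‖f.toFun μ‖ ≤ C) :
    gnorm f ≤ C := by
  rcases isEmpty_or_nonempty (MG G) with hh | hh
  · rw [gnorm, Real.iSup_of_isEmpty]; exact h0
  · exact ciSup_le h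

instance : NormedAddCommGroup (GenFun G) :=
  AddGroupNorm.toNormedAddCommGroup
  { toFun := gnorm
    map_zero' := gnorm_zero
    add_le' := by
      intro f g
      refine gnorm_le (add_nonneg (gnorm_nonneg f) (gnorm_nonneg g)) fun μ => ?_
      rw [add_toFun]
      exact (norm_add_le _ _).trans (add_le_add (norm_le_gnorm f μ) (norm_le_gnorm g μ))
    neg' := by
      intro f
      unfold gnorm
      congr 1
      funext μ
      rw [neg_toFun, norm_neg]
    eq_zero_of_map_eq_zero' := by
      intro f hf
      refine ext' fun μ => ?_
      have h1 : ‖f.toFun μ‖ ≤ 0 := hf ▸ norm_le_gnorm f μ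
      have : ‖f.toFun μ‖ = 0 := le_antisymm h1 (norm_nonneg _)
      simpa [norm_eq_zero] using this }

theorem norm_def (f : GenFun G) : ‖f‖ = gnorm f := rfl

instance : NormedSpace ℂ (GenFun G) where
  norm_smul_le c f := by
    refine gnorm_le (mul_nonneg (norm_nonneg c) (gnorm_nonneg f)) fun μ => ?_
    rw [smul_toFun, norm_smul]
    exact mul_le_mul_of_nonneg_left (norm_le_gnorm f μ) (norm_nonneg c)

end GenFun

/-- A generalised function vanishes at infinity. -/
def MemGL0 (f : GenFun G) : Prop :=
  ∀ ε : ℝ, 0 < ε → ∃ K : Set G, IsCompact K ∧ ∀ μ : MG G,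
    eLpNorm (Kᶜ.indicator ⇑(f.toFun μ)) ⊤ (cmAbs G μ.toCM) < ENNReal.ofReal ε

variable [T2Space G] [BorelSpace G]

theorem indicator_norm_mono {K L : Set G} (hKL : K ⊆ L) (g : G → ℂ) (x : G) :
    ‖Lᶜ.indicator g x‖ ≤ ‖Kᶜ.indicator g x‖ := by
  by_cases hx : x ∈ Lᶜ
  · rw [Set.indicator_of_mem hx, Set.indicator_of_mem (Set.compl_subset_compl.mpr hKL hx)]
  · rw [Set.indicator_of_notMem hx]
    simp [norm_nonneg]

/-- The space `GL₀(G)` of generalised functions vanishing at infinity, as a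
subspace of `GL(G)`. -/
def GL0 : Submodule ℂ (GenFun G) where
  carrier := {f | MemGL0 G f}
  zero_mem' := by
    intro ε hε
    refine ⟨∅, isCompact_empty, fun μ => ?_⟩
    have h0 : (∅ᶜ : Set G).indicator ⇑((0 : GenFun G).toFun μ)
        =ᵐ[cmAbs G μ.toCM] (0 : G → ℂ) := by
      filter_upwards [Lp.coeFn_zero ℂ ⊤ (cmAbs G μ.toCM)] with x e1
      by_cases hx : x ∈ (∅ᶜ : Set G)
      · rw [Set.indicator_of_mem hx]; exact e1
      · rw [Set.indicator_of_notMem hx]; rfl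
    rw [eLpNorm_congr_ae h0, eLpNorm_zero]
    exact ENNReal.ofReal_pos.mpr hε
  add_mem' := by
    intro f g hf hg ε hε
    obtain ⟨Kf, hKf, hf'⟩ := hf (ε / 2) (by linarith)
    obtain ⟨Kg, hKg, hg'⟩ := hg (ε / 2) (by linarith)
    refine ⟨Kf ∪ Kg, hKf.union hKg, fun μ => ?_⟩
    have hmeas : MeasurableSet ((Kf ∪ Kg)ᶜ : Set G) :=
      ((hKf.union hKg).isClosed.measurableSet).compl
    have hsum : ((Kf ∪ Kg)ᶜ : Set G).indicator ⇑((f + g).toFun μ)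
        =ᵐ[cmAbs G μ.toCM]
        ((Kf ∪ Kg)ᶜ : Set G).indicator ⇑(f.toFun μ) +
        ((Kf ∪ Kg)ᶜ : Set G).indicator ⇑(g.toFun μ) := by
      filter_upwards [Lp.coeFn_add (f.toFun μ) (g.toFun μ)] with x e1
      by_cases hx : x ∈ ((Kf ∪ Kg)ᶜ : Set G)
      · simp only [Set.indicator_of_mem hx, Pi.add_apply, GenFun.add_toFun]
        rw [e1]; rfl
      · simp only [Pi.add_apply, Set.indicator_of_notMem hx, add_zero]
    calc eLpNorm (((Kf ∪ Kg)ᶜ : Set G).indicator ⇑((f + g).toFun μ)) ⊤ (cmAbs G μ.toCM)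
        = eLpNorm (((Kf ∪ Kg)ᶜ : Set G).indicator ⇑(f.toFun μ) +
            ((Kf ∪ Kg)ᶜ : Set G).indicator ⇑(g.toFun μ)) ⊤ (cmAbs G μ.toCM) :=
          eLpNorm_congr_ae hsum
      _ ≤ eLpNorm (((Kf ∪ Kg)ᶜ : Set G).indicator ⇑(f.toFun μ)) ⊤ (cmAbs G μ.toCM) +
            eLpNorm (((Kf ∪ Kg)ᶜ : Set G).indicator ⇑(g.toFun μ)) ⊤ (cmAbs G μ.toCM) :=
          eLpNorm_add_le ((Lp.aestronglyMeasurable (f.toFun μ)).indicator hmeas)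
            ((Lp.aestronglyMeasurable (g.toFun μ)).indicator hmeas) le_top
      _ ≤ eLpNorm ((Kfᶜ : Set G).indicator ⇑(f.toFun μ)) ⊤ (cmAbs G μ.toCM) +
            eLpNorm ((Kgᶜ : Set G).indicator ⇑(g.toFun μ)) ⊤ (cmAbs G μ.toCM) := by
          gcongr
          · exact eLpNorm_mono fun x => indicator_norm_mono G Set.subset_union_left _ x
          · exact eLpNorm_mono fun x => indicator_norm_mono G Set.subset_union_right _ x
      _ < ENNReal.ofReal (ε / 2) + ENNReal.ofReal (ε / 2) :=
          ENNReal.add_lt_add (hf' μ) (hg' μ)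
      _ = ENNReal.ofReal ε := by
          rw [← ENNReal.ofReal_add (by linarith) (by linarith)]
          norm_num
  smul_mem' := by
    intro c f hf ε hε
    obtain ⟨K, hK, hf'⟩ := hf (ε / (‖c‖ + 1)) (by positivity)
    refine ⟨K, hK, fun μ => ?_⟩
    have hsmul : (Kᶜ : Set G).indicator ⇑((c • f).toFun μ)
        =ᵐ[cmAbs G μ.toCM] c • (Kᶜ : Set G).indicator ⇑(f.toFun μ) := by
      filter_upwards [Lp.coeFn_smul c (f.toFun μ)] with x e1
      by_cases hx : x ∈ (Kᶜ : Set G)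
      · simp only [Set.indicator_of_mem hx, Pi.smul_apply, GenFun.smul_toFun]
        rw [e1]; rfl
      · simp only [Pi.smul_apply, Set.indicator_of_notMem hx, smul_zero]
    calc eLpNorm ((Kᶜ : Set G).indicator ⇑((c • f).toFun μ)) ⊤ (cmAbs G μ.toCM)
        = (‖c‖₊ : ℝ≥0∞) * eLpNorm ((Kᶜ : Set G).indicator ⇑(f.toFun μ)) ⊤ (cmAbs G μ.toCM) := by
          rw [eLpNorm_congr_ae hsmul, eLpNorm_const_smul]; rfl
      _ ≤ ENNReal.ofReal ‖c‖ * ENNReal.ofReal (ε / (‖c‖ + 1)) := by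
          rw [_root_.ofReal_norm]
          exact mul_le_mul' le_rfl (hf' μ).le
      _ = ENNReal.ofReal (‖c‖ * (ε / (‖c‖ + 1))) :=
          (ENNReal.ofReal_mul (norm_nonneg c)).symm
      _ < ENNReal.ofReal ε := by
          refine (ENNReal.ofReal_lt_ofReal_iff hε).mpr ?_
          have hpos : (0 : ℝ) < ‖c‖ + 1 := by positivity
          rw [mul_div_assoc', div_lt_iff₀ hpos]
          nlinarith [norm_nonneg c]


section Pairing

theorem rePos_le (μ : ComplexMeasure G) :
    (ComplexMeasure.re μ).toJordanDecomposition.posPart ≤ cmAbs G μ :=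
  (Measure.le_add_right (le_refl _) :
      (ComplexMeasure.re μ).toJordanDecomposition.posPart ≤ (ComplexMeasure.re μ).totalVariation).trans
    (Measure.le_add_right (le_refl _))

theorem reNeg_le (μ : ComplexMeasure G) :
    (ComplexMeasure.re μ).toJordanDecomposition.negPart ≤ cmAbs G μ :=
  (Measure.le_add_left (le_refl _) :
      (ComplexMeasure.re μ).toJordanDecomposition.negPart ≤ (ComplexMeasure.re μ).totalVariation).trans
    (Measure.le_add_right (le_refl _))

theorem imPos_le (μ : ComplexMeasure G) :
    (ComplexMeasure.im μ).toJordanDecomposition.posPart ≤ cmAbs G μ :=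
  (Measure.le_add_right (le_refl _) :
      (ComplexMeasure.im μ).toJordanDecomposition.posPart ≤ (ComplexMeasure.im μ).totalVariation).trans
    (Measure.le_add_left (le_refl _))

theorem imNeg_le (μ : ComplexMeasure G) :
    (ComplexMeasure.im μ).toJordanDecomposition.negPart ≤ cmAbs G μ :=
  (Measure.le_add_left (le_refl _) :
      (ComplexMeasure.im μ).toJordanDecomposition.negPart ≤ (ComplexMeasure.im μ).totalVariation).trans
    (Measure.le_add_left (le_refl _))

variable {G}

theorem ae_norm_le_of_Lp_top {μ : Measure G} (f : Lp ℂ ⊤ μ) :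
    ∀ᵐ x ∂μ, ‖f x‖ ≤ ‖f‖ := by
  have h := enorm_ae_le_eLpNormEssSup (⇑f) μ
  filter_upwards [h] with x hx
  have hlt : eLpNormEssSup (⇑f) μ < ⊤ := by
    have h2 := Lp.eLpNorm_lt_top f
    rwa [eLpNorm_exponent_top] at h2
  have h3 : ((‖f x‖₊ : ℝ≥0∞)).toReal ≤ (eLpNormEssSup (⇑f) μ).toReal :=
    ENNReal.toReal_mono hlt.ne hx
  simpa [Lp.norm_def, eLpNorm_exponent_top] using h3

theorem integrable_part {μ : Measure G} {m : Measure G} [IsFiniteMeasure m] (hm : m ≤ μ)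
    (f : Lp ℂ ⊤ μ) : Integrable (⇑f) m :=
  MemLp.integrable le_top ((Lp.memLp f).mono_measure hm)

variable (G)

/-- The duality pairing between generalised functions and measures,
`⟨f, μ⟩ = ∫ f_μ dμ`. -/
def pair (f : GenFun G) (μ : MG G) : ℂ := cInt G μ.toCM ⇑(f.toFun μ)

theorem pair_add (f g : GenFun G) (μ : MG G) :
    pair G (f + g) μ = pair G f μ + pair G g μ := by
  have key : ∀ m : Measure G, m ≤ cmAbs G μ.toCM → IsFiniteMeasure m →
      ∫ x, ((f + g).toFun μ) x ∂m = (∫ x, (f.toFun μ) x ∂m) + ∫ x, (g.toFun μ) x ∂m := by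
    intro m hm hfin
    have hae : ⇑((f + g).toFun μ) =ᵐ[m] ⇑(f.toFun μ) + ⇑(g.toFun μ) := by
      exact (Measure.absolutelyContinuous_of_le hm).ae_le (Lp.coeFn_add (f.toFun μ) (g.toFun μ))
    rw [integral_congr_ae hae]
    exact integral_add (integrable_part hm (f.toFun μ)) (integrable_part hm (g.toFun μ))
  unfold pair cInt
  rw [key _ (rePos_le G μ.toCM) inferInstance, key _ (reNeg_le G μ.toCM) inferInstance,
    key _ (imPos_le G μ.toCM) inferInstance, key _ (imNeg_le G μ.toCM) inferInstance]
  ring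

theorem pair_smul (c : ℂ) (f : GenFun G) (μ : MG G) :
    pair G (c • f) μ = c * pair G f μ := by
  have key : ∀ m : Measure G, m ≤ cmAbs G μ.toCM →
      ∫ x, ((c • f).toFun μ) x ∂m = c * ∫ x, (f.toFun μ) x ∂m := by
    intro m hm
    have hae : ⇑((c • f).toFun μ) =ᵐ[m] c • ⇑(f.toFun μ) :=
      (Measure.absolutelyContinuous_of_le hm).ae_le (Lp.coeFn_smul c (f.toFun μ))
    rw [integral_congr_ae hae]
    simpa using integral_smul c (⇑(f.toFun μ))
  unfold pair cInt
  rw [key _ (rePos_le G μ.toCM), key _ (reNeg_le G μ.toCM),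
    key _ (imPos_le G μ.toCM), key _ (imNeg_le G μ.toCM)]
  ring

/-- The total mass bound associated to a measure. -/
def massBound (μ : MG G) : ℝ :=
  ((cmAbs G μ.toCM) Set.univ).toReal

theorem pair_norm_le (f : GenFun G) (μ : MG G) :
    ‖pair G f μ‖ ≤ 4 * massBound G μ * ‖f‖ := by
  have key : ∀ m : Measure G, m ≤ cmAbs G μ.toCM → IsFiniteMeasure m →
      ‖∫ x, (f.toFun μ) x ∂m‖ ≤ massBound G μ * ‖f‖ := by
    intro m hm hfin
    have hb : ∀ᵐ x ∂m, ‖(f.toFun μ) x‖ ≤ ‖f.toFun μ‖ :=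
      (Measure.absolutelyContinuous_of_le hm).ae_le (ae_norm_le_of_Lp_top (f.toFun μ))
    have h1 : ‖∫ x, (f.toFun μ) x ∂m‖ ≤ ‖f.toFun μ‖ * (m Set.univ).toReal :=
      norm_integral_le_of_norm_le_const hb
    have h2 : (m Set.univ).toReal ≤ massBound G μ := by
      refine ENNReal.toReal_mono (measure_ne_top _ _) (hm Set.univ)
    calc ‖∫ x, (f.toFun μ) x ∂m‖ ≤ ‖f.toFun μ‖ * (m Set.univ).toReal := h1
      _ ≤ ‖f‖ * massBound G μ := by
          apply mul_le_mul (GenFun.norm_le_gnorm f μ) h2 ENNReal.toReal_nonneg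
          exact (norm_nonneg _).trans (GenFun.norm_le_gnorm f μ)
      _ = massBound G μ * ‖f‖ := mul_comm _ _
  unfold pair cInt
  have k1 := key _ (rePos_le G μ.toCM) inferInstance
  have k2 := key _ (reNeg_le G μ.toCM) inferInstance
  have k3 := key _ (imPos_le G μ.toCM) inferInstance
  have k4 := key _ (imNeg_le G μ.toCM) inferInstance
  calc ‖_ + _‖ ≤ _ := norm_add_le _ _
    _ ≤ 4 * massBound G μ * ‖f‖ := by
        have e1 := norm_sub_le (∫ x, (f.toFun μ) x ∂(ComplexMeasure.re μ.toCM).toJordanDecomposition.posPart)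
          (∫ x, (f.toFun μ) x ∂(ComplexMeasure.re μ.toCM).toJordanDecomposition.negPart)
        have e2 := norm_sub_le (∫ x, (f.toFun μ) x ∂(ComplexMeasure.im μ.toCM).toJordanDecomposition.posPart)
          (∫ x, (f.toFun μ) x ∂(ComplexMeasure.im μ.toCM).toJordanDecomposition.negPart)
        have e3 : ‖Complex.I * ((∫ x, (f.toFun μ) x ∂(ComplexMeasure.im μ.toCM).toJordanDecomposition.posPart) -
            ∫ x, (f.toFun μ) x ∂(ComplexMeasure.im μ.toCM).toJordanDecomposition.negPart)‖ =
            ‖(∫ x, (f.toFun μ) x ∂(ComplexMeasure.im μ.toCM).toJordanDecomposition.posPart) -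
            ∫ x, (f.toFun μ) x ∂(ComplexMeasure.im μ.toCM).toJordanDecomposition.negPart‖ := by
          rw [norm_mul, Complex.norm_I, one_mul]
        rw [e3]
        nlinarith [k1, k2, k3, k4]

/-- The canonical embedding of `M(G)` into the dual of `GL(G)` (w.r.t. the
pairing `⟨f, η⟩ = ∫ f_η dη`), i.e. `Ψ⁻¹`-transpose. -/
def measFun (η : MG G) : GenFun G →L[ℂ] ℂ :=
  LinearMap.mkContinuous
    { toFun := fun f => pair G f η
      map_add' := fun f g => pair_add G f g η
      map_smul' := fun c f => pair_smul G c f η }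
    (4 * massBound G η) (fun f => pair_norm_le G f η)

end Pairing


/-- The dual space `GL₀(G)*`. -/
abbrev DualGL0 := ↥(GL0 G) →L[ℂ] ℂ

/-- The second dual `M(G)** = GL(G)*`. -/
abbrev DualGL := GenFun G →L[ℂ] ℂ

/-- The embedding of `M(G)` into `GL₀(G)*`. -/
def measFun0 (η : MG G) : DualGL0 G := (measFun G η).comp (GL0 G).subtypeL

/-- The restriction map `M(G)** → GL₀(G)*`. -/
def restrict0 (m : DualGL G) : DualGL0 G := m.comp (GL0 G).subtypeL


open scoped ZeroAtInfty

section Predicates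

/-- A generalised function is positive (in the C*-algebra sense), equivalently
all its coordinates are a.e. nonnegative. -/
def NonnegGF (f : GenFun G) : Prop :=
  ∀ μ : MG G, ∀ᵐ x ∂(cmAbs G μ.toCM), ∃ r : ℝ, 0 ≤ r ∧ (f.toFun μ) x = r

/-- A complex measure is positive. -/
def NonnegCM (μ : ComplexMeasure G) : Prop :=
  ∀ A : Set G, MeasurableSet A → ∃ r : ℝ, 0 ≤ r ∧ μ A = r

/-- `g` represents the pointwise function `u` as a generalised function. -/
def IsRepFun (u : G → ℂ) (g : GenFun G) : Prop :=
  ∀ μ : MG G, ⇑(g.toFun μ) =ᵐ[cmAbs G μ.toCM] u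

/-- `g = χ_K ⬝ f` coordinatewise. -/
def IsIndMul (K : Set G) (f g : GenFun G) : Prop :=
  ∀ μ : MG G, ⇑(g.toFun μ) =ᵐ[cmAbs G μ.toCM] K.indicator ⇑(f.toFun μ)

/-- `g = u ⬝ f` coordinatewise. -/
def IsMulFun (u : G → ℂ) (f g : GenFun G) : Prop :=
  ∀ μ : MG G, ⇑(g.toFun μ) =ᵐ[cmAbs G μ.toCM] fun x => u x * (f.toFun μ) x

/-- `conv` is the convolution product of `M(G)`:
`⟨μ ∗ ν, g⟩ = ∫∫ g(xy) dμ(x) dν(y)` for `g ∈ C₀(G)`. -/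
def IsConvOp (conv : MG G → MG G → MG G) : Prop :=
  ∀ μ ν : MG G, ∀ g : C₀(G, ℂ),
    cInt G (conv μ ν).toCM ⇑g = cInt G μ.toCM fun x => cInt G ν.toCM fun y => g (x * y)

/-- `circ ζ f` is the generalised function `ζ ∘ f`, satisfying
`⟨ζ ∘ f, μ⟩ = ⟨f, ζ ∗ μ⟩`. -/
def IsLCirc (conv : MG G → MG G → MG G) (circ : MG G → GenFun G → GenFun G) : Prop :=
  ∀ (ζ : MG G) (f : GenFun G) (μ : MG G), pair G (circ ζ f) μ = pair G f (conv ζ μ)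

/-- `rcirc f ζ` is the generalised function `f ∘ ζ`, satisfying
`⟨f ∘ ζ, μ⟩ = ⟨f, μ ∗ ζ⟩`. -/
def IsRCirc (conv : MG G → MG G → MG G) (rcirc : GenFun G → MG G → GenFun G) : Prop :=
  ∀ (f : GenFun G) (ζ : MG G) (μ : MG G), pair G (rcirc f ζ) μ = pair G f (conv μ ζ)

/-- The map `ζ ∘ ·` restricted to `GL₀(G)` (by Lemma 3.3 it maps `GL₀(G)` to
itself). -/
def IsLCirc0 (conv : MG G → MG G → MG G) (circ0 : MG G → ↥(GL0 G) → ↥(GL0 G)) : Prop :=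
  ∀ (ζ : MG G) (f : ↥(GL0 G)) (μ : MG G), pair G (circ0 ζ f : GenFun G) μ = pair G (f : GenFun G) (conv ζ μ)

/-- The map `· ∘ ζ` restricted to `GL₀(G)`. -/
def IsRCirc0 (conv : MG G → MG G → MG G) (rcirc0 : ↥(GL0 G) → MG G → ↥(GL0 G)) : Prop :=
  ∀ (f : ↥(GL0 G)) (ζ : MG G) (μ : MG G), pair G (rcirc0 f ζ : GenFun G) μ = pair G (f : GenFun G) (conv μ ζ)

/-- `lt0 n f` is the generalised function `n·f ∈ GL₀(G)` determined by
`⟨n f, ζ⟩ = ⟨n, ζ ∘ f⟩`. -/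
def IsLT0 (circ0 : MG G → ↥(GL0 G) → ↥(GL0 G)) (lt0 : DualGL0 G → ↥(GL0 G) → ↥(GL0 G)) : Prop :=
  ∀ (n : DualGL0 G) (f : ↥(GL0 G)) (ζ : MG G),
    pair G (lt0 n f : GenFun G) ζ = n (circ0 ζ f)

/-- The Arens-type product `⊙` on `GL₀(G)*`: `⟨m ⊙ n, f⟩ = ⟨m, n f⟩`. -/
def IsOdot0 (lt0 : DualGL0 G → ↥(GL0 G) → ↥(GL0 G))
    (odot : DualGL0 G → DualGL0 G → DualGL0 G) : Prop :=
  ∀ (m n : DualGL0 G) (f : ↥(GL0 G)), odot m n f = m (lt0 n f)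

/-- `ltF n f` is the generalised function `n·f` determined by
`⟨n f, ζ⟩ = ⟨n, ζ ∘ f⟩`, for `n ∈ M(G)** = GL(G)*`. -/
def IsLTF (circ : MG G → GenFun G → GenFun G) (ltF : DualGL G → GenFun G → GenFun G) : Prop :=
  ∀ (n : DualGL G) (f : GenFun G) (ζ : MG G), pair G (ltF n f) ζ = n (circ ζ f)

/-- The first Arens product `⊙` on `M(G)**`: `⟨m ⊙ n, f⟩ = ⟨m, n f⟩`. -/
def IsOdotF (ltF : DualGL G → GenFun G → GenFun G)
    (odotF : DualGL G → DualGL G → DualGL G) : Prop :=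
  ∀ (m n : DualGL G) (f : GenFun G), odotF m n f = m (ltF n f)

/-- A functional in `GL₀(G)*` has compact carrier `K`. -/
def HasCarrier0 (m : DualGL0 G) (K : Set G) : Prop :=
  IsCompact K ∧ ∀ f g : ↥(GL0 G), IsIndMul G K (f : GenFun G) (g : GenFun G) → m g = m f

/-- A functional in `M(G)**` has compact carrier `K`. -/
def HasCarrierF (m : DualGL G) (K : Set G) : Prop :=
  IsCompact K ∧ ∀ f g : GenFun G, IsIndMul G K f g → m g = m f

/-- `M_c(G)**`, the norm closure of the set of functionals with compact carrier
in `M(G)**`. -/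
def McSet : Set (DualGL G) := closure {m : DualGL G | ∃ K : Set G, HasCarrierF G m K}

/-- A positive functional. -/
def IsPosFunc0 (m : DualGL0 G) : Prop :=
  ∀ f : ↥(GL0 G), NonnegGF G (f : GenFun G) → ∃ r : ℝ, 0 ≤ r ∧ m f = r

/-- A positive functional on `GL(G)`. -/
def IsPosFuncF (m : DualGL G) : Prop :=
  ∀ f : GenFun G, NonnegGF G f → ∃ r : ℝ, 0 ≤ r ∧ m f = r

/-- The operator `T` maps the unit ball of `S` into a norm-compact set
(relative compactness of the image of the unit ball). -/
def CCBallOn (T : DualGL0 G → DualGL0 G) (S : Set (DualGL0 G)) : Prop :=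
  ∃ K : Set (DualGL0 G), IsCompact K ∧ ∀ n ∈ S, ‖n‖ ≤ 1 → T n ∈ K

/-- The operator `T` maps the unit ball of `S` into a weakly compact set. -/
def WCCBallOn (T : DualGL0 G → DualGL0 G) (S : Set (DualGL0 G)) : Prop :=
  ∃ K : Set (WeakSpace ℂ (DualGL0 G)), IsCompact K ∧
    ∀ n ∈ S, ‖n‖ ≤ 1 → toWeakSpace ℂ (DualGL0 G) (T n) ∈ K

/-- The image of `M_a(G)` in `GL₀(G)*`. -/
def MaSet (lam : Measure G) : Set (DualGL0 G) :=
  {n : DualGL0 G | ∃ σ : MG G, cmAbs G σ.toCM ≪ lam ∧ n = measFun0 G σ}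

end Predicates

end GLpaper

open GLpaper

section AuxDirac

open MeasureTheory

variable {G : Type} [Group G] [TopologicalSpace G] [MeasurableSpace G]
  [T2Space G] [BorelSpace G]

theorem dirac_regular (x : G) : (Measure.dirac x).Regular := by
  have hout : (Measure.dirac x).OuterRegular := by
    constructor
    intro A hA r hr
    by_cases hx : x ∈ A
    · refine ⟨Set.univ, Set.subset_univ A, isOpen_univ, ?_⟩
      simpa [Measure.dirac_apply_of_mem hx, Measure.dirac_apply_of_mem (Set.mem_univ x)]
        using hr
    · refine ⟨{x}ᶜ, Set.subset_compl_singleton_iff.mpr hx, isOpen_compl_singleton, ?_⟩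
      have h1 : Measure.dirac x ({x}ᶜ : Set G) = 0 := by
        simp [Measure.dirac_apply, Set.indicator_apply]
      have h2 : Measure.dirac x A = 0 := by
        simp [Measure.dirac_apply, Set.indicator_apply, hx]
      rw [h1]
      rw [h2] at hr
      exact pos_of_gt hr
  have hinner : (Measure.dirac x).InnerRegularWRT IsCompact IsOpen := by
    intro V hV r hr
    by_cases hx : x ∈ V
    · refine ⟨{x}, Set.singleton_subset_iff.mpr hx, isCompact_singleton, ?_⟩
      have h1 : Measure.dirac x ({x} : Set G) = 1 := by
        simp [Measure.dirac_apply_of_mem (Set.mem_singleton x)]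
      rw [h1]
      exact lt_of_lt_of_le hr (prob_le_one)
    · have h2 : Measure.dirac x V = 0 := by
        simp [Measure.dirac_apply, Set.indicator_apply, hx]
      rw [h2] at hr
      exact absurd hr (by simp)
  exact { toIsFiniteMeasureOnCompacts := inferInstance, toOuterRegular := hout,
          innerRegular := hinner }

/-- The dirac measure as a complex measure. -/
def cdirac (x : G) : ComplexMeasure G :=
  SignedMeasure.toComplexMeasure (Measure.dirac x).toSignedMeasure 0

theorem toJD_toSignedMeasure (μ : Measure G) [IsFiniteMeasure μ] :
    μ.toSignedMeasure.toJordanDecomposition =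
      ⟨μ, 0, Measure.MutuallySingular.zero_right⟩ := by
  have h : μ.toSignedMeasure =
      (⟨μ, 0, Measure.MutuallySingular.zero_right⟩ : JordanDecomposition G).toSignedMeasure := by
    show μ.toSignedMeasure = μ.toSignedMeasure - (0 : Measure G).toSignedMeasure
    rw [Measure.toSignedMeasure_zero, sub_zero]
  rw [h, JordanDecomposition.toJordanDecomposition_toSignedMeasure]

theorem re_cdirac (x : G) :
    ComplexMeasure.re (cdirac x) = (Measure.dirac x).toSignedMeasure := rfl

theorem im_cdirac (x : G) : ComplexMeasure.im (cdirac x) = 0 := rfl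

theorem cdirac_rePos (x : G) :
    (ComplexMeasure.re (cdirac x)).toJordanDecomposition.posPart = Measure.dirac x := by
  rw [re_cdirac, toJD_toSignedMeasure]

theorem cdirac_reNeg (x : G) :
    (ComplexMeasure.re (cdirac x)).toJordanDecomposition.negPart = 0 := by
  rw [re_cdirac, toJD_toSignedMeasure]

theorem cdirac_imPos (x : G) :
    (ComplexMeasure.im (cdirac x)).toJordanDecomposition.posPart = 0 := by
  rw [im_cdirac, SignedMeasure.toJordanDecomposition_zero]
  rfl

theorem cdirac_imNeg (x : G) :
    (ComplexMeasure.im (cdirac x)).toJordanDecomposition.negPart = 0 := by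
  rw [im_cdirac, SignedMeasure.toJordanDecomposition_zero]
  rfl

theorem cmAbs_cdirac (x : G) : cmAbs G (cdirac x) = Measure.dirac x := by
  unfold GLpaper.cmAbs SignedMeasure.totalVariation
  rw [cdirac_rePos, cdirac_reNeg, cdirac_imPos, cdirac_imNeg]
  simp

theorem cInt_cdirac (x : G) (h : G → ℂ) : cInt G (cdirac x) h = h x := by
  unfold GLpaper.cInt
  rw [cdirac_rePos, cdirac_reNeg, cdirac_imPos, cdirac_imNeg]
  simp [integral_dirac]

/-- The dirac measure as an element of `M(G)`. -/
def cdMG (x : G) : MG G :=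
  ⟨cdirac x, by rw [cmAbs_cdirac]; exact dirac_regular x⟩

theorem cdMG_toCM (x : G) : (cdMG x).toCM = cdirac x := rfl

theorem cmAbs_cdMG (x : G) : cmAbs G (cdMG x).toCM = Measure.dirac x := cmAbs_cdirac x

theorem massBound_cdMG (x : G) : massBound G (cdMG x) = 1 := by
  unfold GLpaper.massBound
  rw [cmAbs_cdMG]
  simp

theorem pair_cdMG_norm_le (f : GenFun G) (x : G) : ‖pair G f (cdMG x)‖ ≤ 4 * ‖f‖ := by
  have h := pair_norm_le G f (cdMG x)
  rwa [massBound_cdMG, mul_one] at h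

end AuxDirac

section AuxInd

open MeasureTheory

variable {G : Type} [Group G] [TopologicalSpace G] [MeasurableSpace G]
  [T2Space G] [BorelSpace G]

theorem indicator_one_norm_le_one (A : Set G) (y : G) :
    ‖A.indicator (fun _ => (1 : ℂ)) y‖ ≤ 1 := by
  by_cases hy : y ∈ A <;> simp [Set.indicator_apply, hy]

theorem indMem (A : Set G) (hA : MeasurableSet A) (μ : Measure G) :
    MemLp (A.indicator fun _ => (1 : ℂ)) ⊤ μ :=
  memLp_top_of_bound (measurable_const.indicator hA).aestronglyMeasurable 1
    (Filter.Eventually.of_forall (indicator_one_norm_le_one A))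

theorem indLp_norm_le (A : Set G) (hA : MeasurableSet A) (m : Measure G) :
    ‖(indMem A hA m).toLp (A.indicator fun _ => (1 : ℂ))‖ ≤ 1 := by
  rw [Lp.norm_toLp]
  refine ENNReal.toReal_le_of_le_ofReal zero_le_one ?_
  rw [eLpNorm_exponent_top, ENNReal.ofReal_one]
  simpa using eLpNormEssSup_le_of_ae_bound (μ := m)
    (Filter.Eventually.of_forall (indicator_one_norm_le_one A))

/-- The generalised function `χ_A`. -/
def indGF (A : Set G) (hA : MeasurableSet A) : GenFun G where
  toFun μ := (indMem A hA (cmAbs G μ.toCM)).toLp (A.indicator fun _ => (1 : ℂ))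
  compat μ ν h :=
    ((indMem A hA (cmAbs G μ.toCM)).coeFn_toLp).trans
      (((indMem A hA (cmAbs G ν.toCM)).coeFn_toLp).filter_mono h.ae_le).symm
  bdd := by
    refine ⟨1, ?_⟩
    rintro r ⟨μ, rfl⟩
    exact indLp_norm_le A hA _

theorem indGF_coeFn (A : Set G) (hA : MeasurableSet A) (μ : MG G) :
    ⇑((indGF A hA).toFun μ) =ᵐ[cmAbs G μ.toCM] A.indicator (fun _ => (1 : ℂ)) :=
  (indMem A hA (cmAbs G μ.toCM)).coeFn_toLp

theorem indGF_norm_le_one (A : Set G) (hA : MeasurableSet A) :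
    ‖indGF A hA‖ ≤ 1 := by
  refine GenFun.gnorm_le zero_le_one fun μ => ?_
  exact indLp_norm_le A hA _

theorem pair_indGF (A : Set G) (hA : MeasurableSet A) (ν : MG G) :
    pair G (indGF A hA) ν =
      ((((ComplexMeasure.re ν.toCM).toJordanDecomposition.posPart A).toReal : ℂ) -
        (((ComplexMeasure.re ν.toCM).toJordanDecomposition.negPart A).toReal : ℂ)) +
      Complex.I * ((((ComplexMeasure.im ν.toCM).toJordanDecomposition.posPart A).toReal : ℂ) -
        (((ComplexMeasure.im ν.toCM).toJordanDecomposition.negPart A).toReal : ℂ)) := by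
  have key : ∀ m : Measure G, m ≤ cmAbs G ν.toCM →
      ∫ y, ((indGF A hA).toFun ν) y ∂m = ((m A).toReal : ℂ) := by
    intro m hm
    have hae : ⇑((indGF A hA).toFun ν) =ᵐ[m] A.indicator (fun _ => (1 : ℂ)) :=
      (Measure.absolutelyContinuous_of_le hm).ae_le (indGF_coeFn A hA ν)
    rw [integral_congr_ae hae, integral_indicator_const (1 : ℂ) hA]
    simp [Measure.real]
  unfold GLpaper.pair GLpaper.cInt
  rw [key _ (rePos_le G ν.toCM), key _ (reNeg_le G ν.toCM),
    key _ (imPos_le G ν.toCM), key _ (imNeg_le G ν.toCM)]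

end AuxInd

section AuxRegular

open MeasureTheory

variable {G : Type} [Group G] [TopologicalSpace G] [MeasurableSpace G]
  [T2Space G] [BorelSpace G]

/-- Outer approximation property. -/
def OutApp (μ : Measure G) : Prop :=
  ∀ C : Set G, MeasurableSet C → ∀ ε : ℝ≥0∞, ε ≠ 0 →
    ∃ U, C ⊆ U ∧ IsOpen U ∧ μ U ≤ μ C + ε

theorem outApp_of_le {A μ : Measure G} [IsFiniteMeasure A] [A.OuterRegular]
    (hμ : μ ≤ A) : OutApp μ := by
  intro C hC ε hε
  obtain ⟨U, hCU, hUo, hU⟩ := Set.exists_isOpen_lt_add C (measure_ne_top A C) hε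
  refine ⟨U, hCU, hUo, ?_⟩
  have h1 : μ U ≤ μ C + μ (U \ C) := by
    rw [← Set.union_diff_cancel hCU]
    exact (measure_union_le _ _).trans (by rw [Set.union_diff_cancel hCU])
  have h2 : μ (U \ C) ≤ A (U \ C) := hμ _
  have h3 : A (U \ C) ≤ ε := by
    rw [measure_diff hCU hC.nullMeasurableSet (measure_ne_top A C)]
    exact tsub_le_iff_left.mpr hU.le
  exact h1.trans (add_le_add_right (h2.trans h3) _)

theorem outApp_dirac (x : G) : OutApp (Measure.dirac x) := by
  intro C hC ε hε
  by_cases hx : x ∈ C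
  · refine ⟨Set.univ, Set.subset_univ C, isOpen_univ, ?_⟩
    have h1 : Measure.dirac x Set.univ = 1 := Measure.dirac_apply_of_mem (Set.mem_univ x)
    have h2 : Measure.dirac x C = 1 := Measure.dirac_apply_of_mem hx
    rw [h1, h2]
    exact le_self_add
  · refine ⟨{x}ᶜ, Set.subset_compl_singleton_iff.mpr hx, isOpen_compl_singleton, ?_⟩
    have h1 : Measure.dirac x ({x}ᶜ : Set G) = 0 := by
      simp [Measure.dirac_apply, Set.indicator_apply]
    rw [h1]
    exact zero_le

theorem outApp_add {μ ν : Measure G} (hμ : OutApp μ) (hν : OutApp ν) : OutApp (μ + ν) := by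
  intro C hC ε hε
  have hε2 : (ε / 2 : ℝ≥0∞) ≠ 0 := (ENNReal.half_pos hε).ne'
  obtain ⟨U₁, hCU₁, hU₁o, hU₁⟩ := hμ C hC (ε / 2) hε2
  obtain ⟨U₂, hCU₂, hU₂o, hU₂⟩ := hν C hC (ε / 2) hε2
  refine ⟨U₁ ∩ U₂, Set.subset_inter hCU₁ hCU₂, hU₁o.inter hU₂o, ?_⟩
  have h1 : μ (U₁ ∩ U₂) ≤ μ C + ε / 2 :=
    (measure_mono Set.inter_subset_left).trans hU₁
  have h2 : ν (U₁ ∩ U₂) ≤ ν C + ε / 2 :=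
    (measure_mono Set.inter_subset_right).trans hU₂
  calc (μ + ν) (U₁ ∩ U₂) = μ (U₁ ∩ U₂) + ν (U₁ ∩ U₂) := by simp
    _ ≤ (μ C + ε / 2) + (ν C + ε / 2) := add_le_add h1 h2
    _ = (μ C + ν C) + (ε / 2 + ε / 2) := by ring
    _ = (μ + ν) C + ε := by rw [ENNReal.add_halves]; simp

/-- Inner approximation by compacts, for measures dominated by a regular measure. -/
theorem innApp_of_le {A μ : Measure G} [IsFiniteMeasure A] (hA : A.Regular)
    (hμ : μ ≤ A) {O : Set G} (hO : MeasurableSet O) {ε : ℝ≥0∞} (hε : ε ≠ 0) :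
    ∃ C, C ⊆ O ∧ IsCompact C ∧ μ O ≤ μ C + ε := by
  haveI := hA
  obtain ⟨C, hCO, hCc, hlt⟩ := hO.exists_isCompact_lt_add (measure_ne_top A O) hε
  refine ⟨C, hCO, hCc, ?_⟩
  have h1 : μ O ≤ μ C + μ (O \ C) := by
    rw [← Set.union_diff_cancel hCO]
    exact (measure_union_le _ _).trans (by rw [Set.union_diff_cancel hCO])
  have h2 : μ (O \ C) ≤ A (O \ C) := hμ _
  have h3 : A (O \ C) ≤ ε := by
    rw [measure_diff hCO hCc.isClosed.measurableSet.nullMeasurableSet (measure_ne_top A C)]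
    exact tsub_le_iff_left.mpr hlt.le
  exact h1.trans (add_le_add_right (h2.trans h3) _)

variable [LocallyCompactSpace G]

/-- Comparison of measures on compact sets via integrals of compactly supported
continuous test functions. -/
theorem measure_compact_le (P Q : Measure G) [IsFiniteMeasure P] [IsFiniteMeasure Q]
    (hQ : OutApp Q)
    (hint : ∀ f : C(G, ℝ), HasCompactSupport f → (∀ y, f y ∈ Set.Icc (0 : ℝ) 1) →
      ∫ y, f y ∂P ≤ ∫ y, f y ∂Q)
    {C : Set G} (hC : IsCompact C) : P C ≤ Q C := by
  refine ENNReal.le_of_forall_pos_le_add fun ε hε _ => ?_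
  obtain ⟨V, hCV, hVo, hV⟩ := hQ C hC.isClosed.measurableSet (ε : ℝ≥0∞)
    (by exact_mod_cast hε.ne')
  obtain ⟨f, hf1, hf0, hfc, hficc⟩ := exists_continuous_one_zero_of_isCompact hC
    hVo.isClosed_compl (Set.disjoint_left.mpr fun y hy hyc => hyc (hCV hy))
  have hfint_P : Integrable (⇑f) P := f.continuous.integrable_of_hasCompactSupport hfc
  have hfint_Q : Integrable (⇑f) Q := f.continuous.integrable_of_hasCompactSupport hfc
  have h1 : (P C).toReal ≤ ∫ y, f y ∂P := by
    have : ∫ y, C.indicator (fun _ => (1 : ℝ)) y ∂P ≤ ∫ y, f y ∂P := by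
      refine integral_mono ((integrable_const (1 : ℝ)).indicator hC.isClosed.measurableSet)
        hfint_P fun y => ?_
      by_cases hy : y ∈ C
      · rw [Set.indicator_of_mem hy]; exact (hf1 hy).ge
      · rw [Set.indicator_of_notMem hy]; exact (hficc y).1
    rwa [integral_indicator_const (1 : ℝ) hC.isClosed.measurableSet, smul_eq_mul, mul_one]
      at this
  have h2 : ∫ y, f y ∂Q ≤ (Q V).toReal := by
    have : ∫ y, f y ∂Q ≤ ∫ y, V.indicator (fun _ => (1 : ℝ)) y ∂Q := by
      refine integral_mono hfint_Q
        ((integrable_const (1 : ℝ)).indicator hVo.measurableSet) fun y => ?_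
      by_cases hy : y ∈ V
      · rw [Set.indicator_of_mem hy]; exact (hficc y).2
      · rw [Set.indicator_of_notMem hy]; exact (hf0 hy).le
    rwa [integral_indicator_const (1 : ℝ) hVo.measurableSet, smul_eq_mul, mul_one] at this
  have h3 : (Q V).toReal ≤ (Q C).toReal + (ε : ℝ) := by
    have := ENNReal.toReal_mono (by finiteness) hV
    rwa [ENNReal.toReal_add (measure_ne_top Q C) (by simp), ENNReal.coe_toReal] at this
  have hfinal : (P C).toReal ≤ (Q C).toReal + (ε : ℝ) :=
    h1.trans ((hint f hfc hficc).trans (h2.trans h3))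
  calc P C = ENNReal.ofReal (P C).toReal := (ENNReal.ofReal_toReal (measure_ne_top P C)).symm
    _ ≤ ENNReal.ofReal ((Q C).toReal + (ε : ℝ)) := ENNReal.ofReal_le_ofReal hfinal
    _ = ENNReal.ofReal (Q C).toReal + ENNReal.ofReal (ε : ℝ) :=
        ENNReal.ofReal_add ENNReal.toReal_nonneg ε.coe_nonneg
    _ = Q C + ε := by rw [ENNReal.ofReal_toReal (measure_ne_top Q C), ENNReal.ofReal_coe_nnreal]

/-- Two measures which agree on compact sets and admit inner approximation agree
on a given set. -/
theorem measure_eq_of_compacts {P Q : Measure G} {O : Set G}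
    [IsFiniteMeasure P] [IsFiniteMeasure Q]
    (hP : ∀ ε : ℝ≥0∞, ε ≠ 0 → ∃ C, C ⊆ O ∧ IsCompact C ∧ P O ≤ P C + ε)
    (hQ : ∀ ε : ℝ≥0∞, ε ≠ 0 → ∃ C, C ⊆ O ∧ IsCompact C ∧ Q O ≤ Q C + ε)
    (hPQ : ∀ C : Set G, IsCompact C → C ⊆ O → P C = Q C) : P O = Q O := by
  refine le_antisymm ?_ ?_
  · refine ENNReal.le_of_forall_pos_le_add fun ε hε _ => ?_
    obtain ⟨C, hCO, hCc, hle⟩ := hP (ε : ℝ≥0∞) (by exact_mod_cast hε.ne')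
    calc P O ≤ P C + ε := hle
      _ = Q C + ε := by rw [hPQ C hCc hCO]
      _ ≤ Q O + ε := add_le_add_left (measure_mono hCO) _
  · refine ENNReal.le_of_forall_pos_le_add fun ε hε _ => ?_
    obtain ⟨C, hCO, hCc, hle⟩ := hQ (ε : ℝ≥0∞) (by exact_mod_cast hε.ne')
    calc Q O ≤ Q C + ε := hle
      _ = P C + ε := by rw [hPQ C hCc hCO]
      _ ≤ P O + ε := add_le_add_left (measure_mono hCO) _

end AuxRegular

section AuxRiesz

open MeasureTheory
open scoped ZeroAtInfty

variable {G : Type} [Group G] [TopologicalSpace G] [MeasurableSpace G]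
  [T2Space G] [BorelSpace G] [LocallyCompactSpace G]

theorem pair_indGF_compl_eq_one (ν : MG G) (x : G)
    (hν : ∀ g : C₀(G, ℂ), cInt G ν.toCM ⇑g = g x)
    {K : Set G} (hK : IsCompact K) (hx : x ∉ K) :
    pair G (indGF Kᶜ hK.isClosed.measurableSet.compl) ν = 1 := by
  haveI hreg := ν.regular
  set P1 := (ComplexMeasure.re ν.toCM).toJordanDecomposition.posPart with hP1
  set P2 := (ComplexMeasure.re ν.toCM).toJordanDecomposition.negPart with hP2
  set P3 := (ComplexMeasure.im ν.toCM).toJordanDecomposition.posPart with hP3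
  set P4 := (ComplexMeasure.im ν.toCM).toJordanDecomposition.negPart with hP4
  -- Step 1: integral identities coming from `C₀` test functions
  have hint : ∀ f : C(G, ℝ), HasCompactSupport (⇑f) →
      ((∫ y, f y ∂P1) = (∫ y, f y ∂P2) + f x ∧ (∫ y, f y ∂P3) = ∫ y, f y ∂P4) := by
    intro f hfc
    have hz : Filter.Tendsto (fun y => ((f y : ℝ) : ℂ)) (Filter.cocompact G) (𝓝 0) := by
      have hev : ∀ᶠ y in Filter.cocompact G, (0 : ℂ) = ((f y : ℝ) : ℂ) := by
        filter_upwards [hfc.compl_mem_cocompact] with y hy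
        simp [image_eq_zero_of_notMem_tsupport hy]
      exact tendsto_const_nhds.congr' hev
    have hg := hν ⟨⟨fun y => ((f y : ℝ) : ℂ), Complex.continuous_ofReal.comp f.continuous⟩, hz⟩
    unfold GLpaper.cInt at hg
    rw [show (⇑(⟨⟨fun y => ((f y : ℝ) : ℂ), Complex.continuous_ofReal.comp f.continuous⟩, hz⟩ :
        C₀(G, ℂ)) : G → ℂ) = fun y => ((f y : ℝ) : ℂ) from rfl] at hg
    beta_reduce at hg
    have hco : ∀ m : Measure G, ∫ y, ((f y : ℝ) : ℂ) ∂m = ((∫ y, f y ∂m : ℝ) : ℂ) := fun m =>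
      integral_ofReal
    rw [hco, hco, hco, hco] at hg
    have hg' : (((∫ y, f y ∂P1 : ℝ) : ℂ) - ((∫ y, f y ∂P2 : ℝ) : ℂ)) +
        Complex.I * (((∫ y, f y ∂P3 : ℝ) : ℂ) - ((∫ y, f y ∂P4 : ℝ) : ℂ)) =
        ((f x : ℝ) : ℂ) := hg
    have h1 : (∫ y, f y ∂P1) - ∫ y, f y ∂P2 = f x := by
      have := congrArg Complex.re hg'
      simpa using this
    have h2 : (∫ y, f y ∂P3) - ∫ y, f y ∂P4 = 0 := by
      have := congrArg Complex.im hg'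
      simpa using this
    exact ⟨by linarith, by linarith⟩
  -- Step 2: comparison on compact sets
  set Q : Measure G := P2 + Measure.dirac x with hQdef
  have houtP1 : OutApp P1 := outApp_of_le (A := cmAbs G ν.toCM) (rePos_le G ν.toCM)
  have houtP3 : OutApp P3 := outApp_of_le (A := cmAbs G ν.toCM) (imPos_le G ν.toCM)
  have houtP4 : OutApp P4 := outApp_of_le (A := cmAbs G ν.toCM) (imNeg_le G ν.toCM)
  have houtQ : OutApp Q :=
    outApp_add (outApp_of_le (A := cmAbs G ν.toCM) (reNeg_le G ν.toCM)) (outApp_dirac x)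
  have hQint : ∀ f : C(G, ℝ), HasCompactSupport (⇑f) →
      ∫ y, f y ∂Q = (∫ y, f y ∂P2) + f x := by
    intro f hfc
    rw [hQdef, integral_add_measure (f.continuous.integrable_of_hasCompactSupport hfc)
      (f.continuous.integrable_of_hasCompactSupport hfc), integral_dirac]
  have hcomp1 : ∀ C : Set G, IsCompact C → P1 C = Q C := by
    intro C hC
    refine le_antisymm (measure_compact_le P1 Q houtQ ?_ hC)
      (measure_compact_le Q P1 houtP1 ?_ hC)
    · intro f hfc hficc
      rw [hQint f hfc, ← (hint f hfc).1]
    · intro f hfc hficc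
      rw [hQint f hfc, ← (hint f hfc).1]
  have hcomp2 : ∀ C : Set G, IsCompact C → P3 C = P4 C := by
    intro C hC
    refine le_antisymm (measure_compact_le P3 P4 houtP4 ?_ hC)
      (measure_compact_le P4 P3 houtP3 ?_ hC)
    · intro f hfc hficc
      rw [(hint f hfc).2]
    · intro f hfc hficc
      rw [(hint f hfc).2]
  -- Step 3: transfer to the open set `Kᶜ`
  have hOmeas : MeasurableSet (Kᶜ : Set G) := hK.isClosed.measurableSet.compl
  have hxO : x ∈ (Kᶜ : Set G) := hx
  have hinnQ : ∀ ε : ℝ≥0∞, ε ≠ 0 → ∃ C, C ⊆ (Kᶜ : Set G) ∧ IsCompact C ∧ Q Kᶜ ≤ Q C + ε := by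
    intro ε hε
    obtain ⟨C, hCO, hCc, hle⟩ := innApp_of_le hreg (reNeg_le G ν.toCM) hOmeas hε
    refine ⟨C ∪ {x}, Set.union_subset hCO (Set.singleton_subset_iff.2 hxO),
      hCc.union isCompact_singleton, ?_⟩
    have hd1 : Measure.dirac x (Kᶜ : Set G) = 1 := Measure.dirac_apply_of_mem hxO
    have hd2 : Measure.dirac x (C ∪ {x}) = 1 :=
      Measure.dirac_apply_of_mem (Set.mem_union_right _ rfl)
    have hle2 : P2 (Kᶜ : Set G) ≤ P2 (C ∪ {x}) + ε :=
      hle.trans (add_le_add_left (measure_mono Set.subset_union_left) ε)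
    calc Q Kᶜ = P2 Kᶜ + 1 := by rw [hQdef, Measure.add_apply, hd1]
      _ ≤ (P2 (C ∪ {x}) + ε) + 1 := add_le_add_left hle2 1
      _ = (P2 (C ∪ {x}) + 1) + ε := by ring
      _ = Q (C ∪ {x}) + ε := by rw [hQdef, Measure.add_apply, hd2]
  have hO1 : P1 Kᶜ = Q Kᶜ :=
    measure_eq_of_compacts
      (fun ε hε => innApp_of_le hreg (rePos_le G ν.toCM) hOmeas hε)
      hinnQ (fun C hC _ => hcomp1 C hC)
  have hO2 : P3 Kᶜ = P4 Kᶜ :=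
    measure_eq_of_compacts
      (fun ε hε => innApp_of_le hreg (imPos_le G ν.toCM) hOmeas hε)
      (fun ε hε => innApp_of_le hreg (imNeg_le G ν.toCM) hOmeas hε)
      (fun C hC _ => hcomp2 C hC)
  -- Step 4: conclude
  rw [pair_indGF]
  have ht1 : (P1 (Kᶜ : Set G)).toReal = (P2 (Kᶜ : Set G)).toReal + 1 := by
    rw [hO1]
    have hQval : Q (Kᶜ : Set G) = P2 Kᶜ + 1 := by
      rw [hQdef, Measure.add_apply, Measure.dirac_apply_of_mem hxO]
    rw [hQval, ENNReal.toReal_add (measure_ne_top _ _) one_ne_top, ENNReal.toReal_one]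
  have ht2 : (P3 (Kᶜ : Set G)).toReal = (P4 (Kᶜ : Set G)).toReal := by rw [hO2]
  rw [ht1, ht2]
  push_cast
  ring

end AuxRiesz

section AuxMU

open MeasureTheory

variable {G : Type} [Group G] [TopologicalSpace G] [MeasurableSpace G]
  [T2Space G] [BorelSpace G]

theorem measFun_apply (η : MG G) (f : GenFun G) : measFun G η f = pair G f η := rfl

theorem cInt_cdMG (x : G) (h : G → ℂ) : cInt G (cdMG x).toCM h = h x := cInt_cdirac x h

theorem tendsto_limUnder_of_bound (U : Ultrafilter G) {φ : G → ℂ} {C : ℝ}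
    (hφ : ∀ y, ‖φ y‖ ≤ C) :
    Filter.Tendsto φ (U : Filter G) (𝓝 (limUnder (U : Filter G) φ)) := by
  apply tendsto_nhds_limUnder
  obtain ⟨c, -, hc⟩ := (isCompact_closedBall (0 : ℂ) C).ultrafilter_le_nhds (U.map φ)
    (by
      rw [le_principal_iff, Ultrafilter.mem_coe, Ultrafilter.mem_map]
      exact Filter.univ_mem' fun y => by
        simpa [Metric.mem_closedBall, dist_zero_right] using hφ y)
  refine ⟨c, ?_⟩
  rwa [Filter.Tendsto, ← Ultrafilter.coe_map]

/-- The "evaluation at infinity" functional on `GL(G)`, given by an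
ultrafilter limit of evaluations against dirac measures. -/
def mU (U : Ultrafilter G) : DualGL G :=
  LinearMap.mkContinuous
    { toFun := fun f => limUnder (U : Filter G) fun y => pair G f (cdMG y)
      map_add' := fun f g => by
        have hf := tendsto_limUnder_of_bound U (fun y => pair_cdMG_norm_le f y)
        have hg := tendsto_limUnder_of_bound U (fun y => pair_cdMG_norm_le g y)
        have hfg := tendsto_limUnder_of_bound U (fun y => pair_cdMG_norm_le (f + g) y)
        have heq : (fun y => pair G (f + g) (cdMG y)) =
            fun y => pair G f (cdMG y) + pair G g (cdMG y) :=
          funext fun y => pair_add G f g (cdMG y)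
        exact tendsto_nhds_unique hfg (heq ▸ hf.add hg)
      map_smul' := fun c f => by
        have hf := tendsto_limUnder_of_bound U (fun y => pair_cdMG_norm_le f y)
        have hcf := tendsto_limUnder_of_bound U (fun y => pair_cdMG_norm_le (c • f) y)
        have heq : (fun y => pair G (c • f) (cdMG y)) =
            fun y => c * pair G f (cdMG y) :=
          funext fun y => pair_smul G c f (cdMG y)
        exact tendsto_nhds_unique hcf (heq ▸ hf.const_mul c) }
    4 (fun f => by
      have hf := tendsto_limUnder_of_bound U (fun y => pair_cdMG_norm_le f y)
      simpa [mul_comm] using le_of_tendsto hf.norm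
        (Filter.Eventually.of_forall fun y => pair_cdMG_norm_le f y))

theorem mU_apply (U : Ultrafilter G) (f : GenFun G) :
    mU U f = limUnder (U : Filter G) fun y => pair G f (cdMG y) := rfl

theorem mU_eq_of_eventually (U : Ultrafilter G) {f : GenFun G} {c : ℂ}
    (h : ∀ᶠ y in (U : Filter G), pair G f (cdMG y) = c) : mU U f = c := by
  rw [mU_apply]
  exact Filter.Tendsto.limUnder_eq
    ((tendsto_const_nhds : Filter.Tendsto (fun _ : G => c) _ _).congr'
      (h.mono fun y hy => hy.symm))

/-- A functional giving the value `1` on all the generalised functions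
`χ_{Kᶜ}` cannot lie in `M_c(G)**`. -/
theorem not_mem_McSet {p : DualGL G}
    (hp : ∀ (K : Set G) (hK : IsCompact K),
      p (indGF Kᶜ hK.isClosed.measurableSet.compl) = 1) :
    p ∉ McSet G := by
  intro hmem
  obtain ⟨q, hq, hdist⟩ := Metric.mem_closure_iff.mp hmem (1 / 2) (by norm_num)
  obtain ⟨K, hKc, hKcar⟩ := hq
  set h : GenFun G := indGF Kᶜ hKc.isClosed.measurableSet.compl with hh
  have hind : IsIndMul G K h 0 := by
    intro μ
    rw [GenFun.zero_toFun]
    filter_upwards [Lp.coeFn_zero ℂ ⊤ (cmAbs G μ.toCM), indGF_coeFn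
      (Kᶜ : Set G) hKc.isClosed.measurableSet.compl μ] with y h0 h1
    rw [h0, Pi.zero_apply]
    by_cases hy : y ∈ K
    · rw [Set.indicator_of_mem hy, h1, Set.indicator_of_notMem (by simp [hy])]
    · rw [Set.indicator_of_notMem hy]
  have hq0 : q h = 0 := by
    have := hKcar h 0 hind
    rw [map_zero] at this
    exact this.symm
  have hnorm : ‖p h - q h‖ ≤ ‖p - q‖ * ‖h‖ := by
    have := (p - q).le_opNorm h
    simpa using this
  rw [hp K hKc, hq0, sub_zero] at hnorm
  have hle : ‖p - q‖ * ‖h‖ ≤ ‖p - q‖ * 1 := by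
    refine mul_le_mul_of_nonneg_left ?_ (norm_nonneg _)
    exact indGF_norm_le_one _ _
  rw [dist_eq_norm] at hdist
  have : (1 : ℝ) ≤ 1 / 2 := by
    calc (1 : ℝ) = ‖(1 : ℂ)‖ := by simp
      _ ≤ ‖p - q‖ * 1 := hnorm.trans hle
      _ ≤ 1 / 2 := by rw [mul_one]; exact hdist.le
  norm_num at this

set_option maxHeartbeats 1000000 in
/-- The dirac measure at the identity, as a functional, lies in `M_c(G)**`. -/
theorem measFun_cdMG_one_mem : measFun G (cdMG (1 : G)) ∈ McSet G := by
  apply subset_closure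
  refine ⟨{(1 : G)}, isCompact_singleton, fun f g hfg => ?_⟩
  have h := hfg (cdMG (1 : G))
  have hae : ae (cmAbs G (cdMG (1 : G)).toCM) = pure (1 : G) := by
    rw [cmAbs_cdMG, MeasureTheory.ae_dirac_eq]
  have h1 : ⇑(g.toFun (cdMG (1 : G))) (1 : G) =
      ({(1 : G)} : Set G).indicator ⇑(f.toFun (cdMG (1 : G))) (1 : G) :=
    Filter.eventually_pure.mp (h.filter_mono hae.ge)
  show pair G g (cdMG (1 : G)) = pair G f (cdMG (1 : G))
  unfold GLpaper.pair
  rw [cInt_cdMG, cInt_cdMG, h1, Set.indicator_of_mem (Set.mem_singleton (1 : G))]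

end AuxMU



/-- `GL₀(G)*` (identified with `M_c(G)**`) is a left ideal,
or a right ideal, of `(M(G)**, ⊙)` if and only if `G` is compact. -/
theorem stmt_12 (G : Type) [Group G] [TopologicalSpace G] [IsTopologicalGroup G]
    [LocallyCompactSpace G] [T2Space G] [MeasurableSpace G] [BorelSpace G]
    (conv : MG G → MG G → MG G) (hconv : IsConvOp G conv)
    (circ : MG G → GenFun G → GenFun G) (hcirc : IsLCirc G conv circ)
    (ltF : DualGL G → GenFun G → GenFun G) (hltF : IsLTF G circ ltF)
    (odotF : DualGL G → DualGL G → DualGL G) (hodotF : IsOdotF G ltF odotF) :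
    ((∀ m n : DualGL G, n ∈ McSet G → odotF m n ∈ McSet G) ∨
      (∀ m n : DualGL G, m ∈ McSet G → odotF m n ∈ McSet G)) ↔
    CompactSpace G := by
  constructor
  · intro hIdeal
    by_contra hnc
    haveI : NoncompactSpace G := not_compactSpace_iff.mp hnc
    set U : Ultrafilter G := Ultrafilter.of (Filter.cocompact G) with hU
    have hUK : ∀ {K : Set G}, IsCompact K → Kᶜ ∈ (U : Filter G) := fun hK =>
      Ultrafilter.of_le (Filter.cocompact G) hK.compl_mem_cocompact
    rcases hIdeal with hL | hR
    · have hp := hL (mU U) (measFun G (cdMG (1 : G))) measFun_cdMG_one_mem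
      refine not_mem_McSet (fun K hK => ?_) hp
      rw [hodotF]
      apply mU_eq_of_eventually
      filter_upwards [hUK hK] with y hy
      calc pair G (ltF (measFun G (cdMG (1 : G)))
              (indGF Kᶜ hK.isClosed.measurableSet.compl)) (cdMG y)
          = measFun G (cdMG (1 : G))
              (circ (cdMG y) (indGF Kᶜ hK.isClosed.measurableSet.compl)) := hltF _ _ _
        _ = pair G (circ (cdMG y) (indGF Kᶜ hK.isClosed.measurableSet.compl))
              (cdMG (1 : G)) := measFun_apply _ _
        _ = pair G (indGF Kᶜ hK.isClosed.measurableSet.compl)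
              (conv (cdMG y) (cdMG (1 : G))) := hcirc _ _ _
        _ = 1 := pair_indGF_compl_eq_one _ y
              (fun g => by rw [hconv, cInt_cdMG, cInt_cdMG]; simp) hK hy
    · have hp := hR (measFun G (cdMG (1 : G))) (mU U) measFun_cdMG_one_mem
      refine not_mem_McSet (fun K hK => ?_) hp
      have e1 : odotF (measFun G (cdMG (1 : G))) (mU U)
            (indGF Kᶜ hK.isClosed.measurableSet.compl)
          = (mU U) (circ (cdMG (1 : G)) (indGF Kᶜ hK.isClosed.measurableSet.compl)) := by
        rw [hodotF]
        calc measFun G (cdMG (1 : G))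
              (ltF (mU U) (indGF Kᶜ hK.isClosed.measurableSet.compl))
            = pair G (ltF (mU U) (indGF Kᶜ hK.isClosed.measurableSet.compl))
                (cdMG (1 : G)) := measFun_apply _ _
          _ = (mU U) (circ (cdMG (1 : G))
                (indGF Kᶜ hK.isClosed.measurableSet.compl)) := hltF _ _ _
      rw [e1]
      apply mU_eq_of_eventually
      filter_upwards [hUK hK] with y hy
      calc pair G (circ (cdMG (1 : G)) (indGF Kᶜ hK.isClosed.measurableSet.compl)) (cdMG y)
          = pair G (indGF Kᶜ hK.isClosed.measurableSet.compl)
              (conv (cdMG (1 : G)) (cdMG y)) := hcirc _ _ _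
        _ = 1 := pair_indGF_compl_eq_one _ y
              (fun g => by rw [hconv, cInt_cdMG, cInt_cdMG]; simp) hK hy
  · intro hG
    haveI := hG
    left
    intro m n _
    apply subset_closure
    refine ⟨Set.univ, isCompact_univ, fun f g hfg => ?_⟩
    have hgf : g = f := GenFun.ext' fun μ => MeasureTheory.Lp.ext (by
      have h := hfg μ
      simpa [Set.indicator_univ] using h)
    rw [hgf]


end
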